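/- Let R be a coherent commutative ring, 𝔗 a torsion theory over R, 𝔞 a finitely generated ideal of R, and M an R-module with M ∈ 𝔗. Then Ext^i_R(R/𝔞, M) ∈ 𝔗 for all i ≥ 0. -/

import Mathlib

open CategoryTheory

universe u

noncomputable section

/-- A torsion theory over `R`: a class of `R`-modules closed under isomorphism, submodules,
quotient modules, extensions, and directed colimits (formulated as closure under directed
unions of submodules). -/
structure IsTorsionTheory (R : Type u) [CommRing R] (T : Set (ModuleCat.{u} R)) : Prop where
  mem_of_iso : ∀ {N N' : ModuleCat.{u} R}, (N ≅ N') → N ∈ T → N' ∈ T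
  submodule_mem : ∀ {N : ModuleCat.{u} R}, N ∈ T → ∀ S : Submodule R N,
    ModuleCat.of R S ∈ T
  quotient_mem : ∀ {N : ModuleCat.{u} R}, N ∈ T → ∀ S : Submodule R N,
    ModuleCat.of R (N ⧸ S) ∈ T
  ext_mem : ∀ {N : ModuleCat.{u} R} (S : Submodule R N),
    ModuleCat.of R S ∈ T → ModuleCat.of R (N ⧸ S) ∈ T → N ∈ T
  directed_mem : ∀ {N : ModuleCat.{u} R} {ι : Type u} [Nonempty ι] (S : ι → Submodule R N),
    Directed (· ≤ ·) S → (∀ i, ModuleCat.of R (S i) ∈ T) → iSup S = ⊤ → N ∈ T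

variable {R : Type u} [CommRing R]

/-- A commutative ring is coherent if every finitely generated ideal is finitely presented. -/
def IsCoherentRing (R : Type u) [CommRing R] : Prop :=
  ∀ I : Ideal R, I.FG → Module.FinitePresentation R I

set_option synthInstance.maxHeartbeats 400000
set_option maxHeartbeats 1000000

lemma fp_of_equiv {M N : Type u} [AddCommGroup M] [Module R M] [AddCommGroup N] [Module R N]
    (e : M ≃ₗ[R] N) (h : Module.FinitePresentation R M) : Module.FinitePresentation R N := by
  haveI := h
  refine Module.finitePresentation_of_surjective e.toLinearMap e.surjective ?_
  rw [LinearMap.ker_eq_bot.mpr e.injective]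
  exact Submodule.fg_bot

lemma coherent_submodule_fp (hR : IsCoherentRing R) :
    ∀ (n : ℕ) (N : Submodule R (Fin n → R)), N.FG → Module.FinitePresentation R N := by
  intro n
  induction n with
  | zero =>
    intro N _
    haveI : Subsingleton (Fin 0 → R) := inferInstance
    haveI : Subsingleton N := ⟨fun a b => Subtype.ext (Subsingleton.elim _ _)⟩
    refine Module.finitePresentation_of_surjective (0 : R →ₗ[R] N)
      (fun y => ⟨0, Subsingleton.elim _ _⟩) ?_
    rw [LinearMap.ker_zero]
    exact Module.Finite.fg_top
  | succ n IH =>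
    intro N hN
    haveI : Module.Finite R N := Module.Finite.iff_fg.mpr hN
    set l : (Fin (n+1) → R) →ₗ[R] R := LinearMap.proj (Fin.last n) with hl
    set p : N →ₗ[R] R := l ∘ₗ N.subtype with hp
    have hI : (LinearMap.range p).FG := by
      have h1 : LinearMap.range p = N.map l := by
        rw [hp, LinearMap.range_comp, Submodule.range_subtype]
      rw [h1]
      exact hN.map l
    haveI hIfp : Module.FinitePresentation R (LinearMap.range p) := hR _ hI
    have hsurj : Function.Surjective p.rangeRestrict := LinearMap.surjective_rangeRestrict p
    have hker : (LinearMap.ker p.rangeRestrict).FG :=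
      Module.FinitePresentation.fg_ker _ hsurj
    set r : (Fin (n+1) → R) →ₗ[R] (Fin n → R) := LinearMap.funLeft R R Fin.castSucc with hr
    set g : (LinearMap.ker p.rangeRestrict) →ₗ[R] (Fin n → R) :=
      (r ∘ₗ N.subtype) ∘ₗ (LinearMap.ker p.rangeRestrict).subtype with hg
    have haux : ∀ z : LinearMap.ker p.rangeRestrict, g z = 0 → z = 0 := by
      rintro ⟨⟨x, hxN⟩, hxker⟩ hgx
      have h1 : ∀ i : Fin n, x i.castSucc = 0 := fun i => congr_fun hgx i
      have h2 : x (Fin.last n) = 0 := by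
        have h3 : p.rangeRestrict ⟨x, hxN⟩ = 0 := hxker
        have h4 : p ⟨x, hxN⟩ = 0 := congrArg Subtype.val h3
        simpa [hp, hl] using h4
      apply Subtype.ext; apply Subtype.ext
      funext i
      exact Fin.lastCases h2 h1 i
    have hginj : Function.Injective g := by
      intro x y hxy
      rw [← sub_eq_zero]
      apply haux
      rw [map_sub, hxy, sub_self]
    have hrange : (LinearMap.range g).FG := by
      have h1 : LinearMap.range g = (LinearMap.ker p.rangeRestrict).map (r ∘ₗ N.subtype) := by
        rw [hg, LinearMap.range_comp, Submodule.range_subtype]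
      rw [h1]
      exact hker.map _
    haveI : Module.FinitePresentation R (LinearMap.ker p.rangeRestrict) := by
      refine Module.finitePresentation_of_surjective (M := LinearMap.range g)
        (N := LinearMap.ker p.rangeRestrict) (h := IH _ hrange)
        (LinearEquiv.ofInjective g hginj).symm.toLinearMap
        (LinearEquiv.surjective _) ?_
      simp only [LinearEquiv.ker, Submodule.fg_bot]
    exact Module.finitePresentation_of_ker p.rangeRestrict hsurj

lemma ker_fp (hR : IsCoherentRing R) {k : ℕ} {N : Type u} [AddCommGroup N] [Module R N]
    (h : Module.FinitePresentation R N) (f : (Fin k → R) →ₗ[R] N)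
    (hf : Function.Surjective f) : Module.FinitePresentation R (LinearMap.ker f) := by
  haveI := h
  exact coherent_submodule_fp hR k _ (Module.FinitePresentation.fg_ker f hf)

lemma tt_pow_mem {T : Set (ModuleCat.{u} R)} (hT : IsTorsionTheory R T)
    {M : Type u} [AddCommGroup M] [Module R M] (hM : ModuleCat.of R M ∈ T) :
    ∀ k : ℕ, ModuleCat.of R (Fin k → M) ∈ T := by
  intro k
  induction k with
  | zero =>
    refine hT.mem_of_iso (LinearEquiv.toModuleIso
      (?_ : (⊥ : Submodule R M) ≃ₗ[R] (Fin 0 → M))) (hT.submodule_mem hM ⊥)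
    exact
      { toFun := fun _ => 0
        invFun := fun _ => 0
        map_add' := fun _ _ => Subsingleton.elim _ _
        map_smul' := fun _ _ => Subsingleton.elim _ _
        left_inv := fun _ => Subsingleton.elim _ _
        right_inv := fun _ => Subsingleton.elim _ _ }
  | succ k IH =>
    set l : (Fin (k+1) → M) →ₗ[R] M := LinearMap.proj (Fin.last k) with hl
    have hlsurj : Function.Surjective l := fun y => ⟨fun _ => y, rfl⟩
    set r : (Fin (k+1) → M) →ₗ[R] (Fin k → M) := LinearMap.funLeft R M Fin.castSucc with hr
    set g : (LinearMap.ker l) →ₗ[R] (Fin k → M) := r ∘ₗ (LinearMap.ker l).subtype with hg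
    have hgbij : Function.Bijective g := by
      constructor
      · intro x y hxy
        rw [← sub_eq_zero]
        set z := x - y with hz
        have hz0 : g z = 0 := by rw [hz, map_sub, hxy, sub_self]
        obtain ⟨zv, hzker⟩ := z
        have h1 : ∀ i : Fin k, zv i.castSucc = 0 := fun i => congr_fun hz0 i
        have h2 : zv (Fin.last k) = 0 := hzker
        apply Subtype.ext
        funext i
        exact Fin.lastCases h2 h1 i
      · intro y
        refine ⟨⟨Fin.snoc y 0, ?_⟩, ?_⟩
        · show (Fin.snoc y 0 : Fin (k+1) → M) (Fin.last k) = 0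
          exact Fin.snoc_last _ _
        · funext i
          show (Fin.snoc y 0 : Fin (k+1) → M) i.castSucc = y i
          exact Fin.snoc_castSucc _ _ i
    have hS : ModuleCat.of R (LinearMap.ker l) ∈ T :=
      hT.mem_of_iso (LinearEquiv.ofBijective g hgbij).symm.toModuleIso IH
    have hQ : ModuleCat.of R ((Fin (k+1) → M) ⧸ LinearMap.ker l) ∈ T :=
      hT.mem_of_iso (l.quotKerEquivOfSurjective hlsurj).symm.toModuleIso hM
    exact hT.ext_mem (N := ModuleCat.of R (Fin (k+1) → M)) (LinearMap.ker l) hS hQ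


namespace FreeResolution

variable (hR : IsCoherentRing R) (N₀ : ModuleCat.{u} R)
  (h₀ : Module.FinitePresentation R N₀)

/-- Choice of a finite free cover of a finitely presented module. -/
noncomputable def cov (N : ModuleCat.{u} R) (h : Module.FinitePresentation R N) :
    Σ' (k : ℕ) (f : (Fin k → R) →ₗ[R] N), Function.Surjective f := by
  haveI := h
  exact ⟨(Module.Finite.exists_fin' R N).choose,
    (Module.Finite.exists_fin' R N).choose_spec.choose,
    (Module.Finite.exists_fin' R N).choose_spec.choose_spec⟩

/-- The tower of syzygies. -/
noncomputable def res : ℕ → Σ' (N : ModuleCat.{u} R), Module.FinitePresentation R N :=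
  fun n => Nat.rec ⟨N₀, h₀⟩
    (fun _ prev => ⟨ModuleCat.of R (LinearMap.ker (cov prev.1 prev.2).2.1),
      ker_fp hR prev.2 (cov prev.1 prev.2).2.1 (cov prev.1 prev.2).2.2⟩) n

noncomputable def kk (n : ℕ) : ℕ := (cov (res hR N₀ h₀ n).1 (res hR N₀ h₀ n).2).1

noncomputable def pp (n : ℕ) :
    (Fin (kk hR N₀ h₀ n) → R) →ₗ[R] (res hR N₀ h₀ n).1 :=
  (cov (res hR N₀ h₀ n).1 (res hR N₀ h₀ n).2).2.1

lemma pp_surj (n : ℕ) : Function.Surjective (pp hR N₀ h₀ n) :=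
  (cov (res hR N₀ h₀ n).1 (res hR N₀ h₀ n).2).2.2

/-- `pp (n+1)` viewed with codomain `ker (pp n)`. -/
noncomputable def pp' (n : ℕ) :
    (Fin (kk hR N₀ h₀ (n+1)) → R) →ₗ[R] LinearMap.ker (pp hR N₀ h₀ n) :=
  pp hR N₀ h₀ (n+1)

lemma pp'_surj (n : ℕ) : Function.Surjective (pp' hR N₀ h₀ n) :=
  pp_surj hR N₀ h₀ (n+1)

noncomputable def FF (n : ℕ) : ModuleCat.{u} R :=
  ModuleCat.of R (Fin (kk hR N₀ h₀ n) → R)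

/-- The differential. -/
noncomputable def dd (n : ℕ) : FF hR N₀ h₀ (n+1) ⟶ FF hR N₀ h₀ n :=
  ModuleCat.ofHom ((LinearMap.ker (pp hR N₀ h₀ n)).subtype ∘ₗ pp' hR N₀ h₀ n)

lemma dd_eq_coe (n : ℕ) (x : Fin (kk hR N₀ h₀ (n+1)) → R) :
    dd hR N₀ h₀ n x = (pp' hR N₀ h₀ n x : Fin (kk hR N₀ h₀ n) → R) := rfl

lemma pp_dd (n : ℕ) (x : Fin (kk hR N₀ h₀ (n+1)) → R) :
    pp hR N₀ h₀ n (dd hR N₀ h₀ n x) = 0 :=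
  LinearMap.mem_ker.mp (pp' hR N₀ h₀ n x).2

lemma pp'_dd (n : ℕ) (x : Fin (kk hR N₀ h₀ (n+2)) → R) :
    pp' hR N₀ h₀ n (dd hR N₀ h₀ (n+1) x) = 0 := by
  have h : pp hR N₀ h₀ (n+1) (dd hR N₀ h₀ (n+1) x) = 0 :=
    pp_dd hR N₀ h₀ (n+1) x
  exact h

lemma dd_comp (n : ℕ) : dd hR N₀ h₀ (n+1) ≫ dd hR N₀ h₀ n = 0 := by
  apply ModuleCat.hom_ext; apply LinearMap.ext
  intro x
  show dd hR N₀ h₀ n (dd hR N₀ h₀ (n+1) x) = 0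
  exact congrArg Subtype.val (pp'_dd hR N₀ h₀ n x)

/-- The resolution complex. -/
noncomputable def cres : ChainComplex (ModuleCat.{u} R) ℕ :=
  ChainComplex.of (FF hR N₀ h₀) (dd hR N₀ h₀) (dd_comp hR N₀ h₀)

lemma cres_exactAt (n : ℕ) : (cres hR N₀ h₀).ExactAt (n+1) := by
  rw [HomologicalComplex.exactAt_iff' _ (n+2) (n+1) n (by simp) (by simp)]
  rw [ShortComplex.moduleCat_exact_iff]
  dsimp [cres, HomologicalComplex.sc', HomologicalComplex.shortComplexFunctor']
  simp only [ChainComplex.of_d]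
  intro x hx
  have hx0 : pp' hR N₀ h₀ n x = 0 := Subtype.ext hx
  obtain ⟨y, hy⟩ := pp'_surj hR N₀ h₀ (n+1) ⟨x, LinearMap.mem_ker.mpr hx0⟩
  refine ⟨y, ?_⟩
  rw [show ChainComplex.of.d (FF hR N₀ h₀) (dd hR N₀ h₀)
      (n+2) (n+1) = dd hR N₀ h₀ (n+1) from ChainComplex.of_d _ _ (n+1)]
  exact congrArg Subtype.val hy

/-- The augmentation map as a morphism `FF 0 ⟶ N₀`. -/
noncomputable def p0 : FF hR N₀ h₀ 0 ⟶ N₀ := ModuleCat.ofHom (pp hR N₀ h₀ 0)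

lemma d10_p0 : (cres hR N₀ h₀).d 1 0 ≫ p0 hR N₀ h₀ = 0 := by
  apply ModuleCat.hom_ext; apply LinearMap.ext
  intro x
  have h1 : (cres hR N₀ h₀).d 1 0 = dd hR N₀ h₀ 0 := ChainComplex.of_d (FF hR N₀ h₀) (dd hR N₀ h₀) 0
  show p0 hR N₀ h₀ ((cres hR N₀ h₀).d 1 0 x) = 0
  rw [h1]
  exact pp_dd hR N₀ h₀ 0 x

/-- The augmentation morphism of complexes. -/
noncomputable def resπ : cres hR N₀ h₀ ⟶ (ChainComplex.single₀ (ModuleCat.{u} R)).obj N₀ :=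
  (ChainComplex.toSingle₀Equiv _ _).symm ⟨p0 hR N₀ h₀, d10_p0 hR N₀ h₀⟩

lemma exact0 : (ShortComplex.mk (dd hR N₀ h₀ 0) (p0 hR N₀ h₀)
    (by apply ModuleCat.hom_ext; apply LinearMap.ext; intro x; exact pp_dd hR N₀ h₀ 0 x)).Exact := by
  rw [ShortComplex.moduleCat_exact_iff]
  intro x hx
  obtain ⟨y, hy⟩ := pp'_surj hR N₀ h₀ 0 ⟨x, LinearMap.mem_ker.mpr hx⟩
  refine ⟨y, ?_⟩
  rw [dd_eq_coe, hy]

instance p0_epi : CategoryTheory.Epi (p0 hR N₀ h₀) :=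
  (ModuleCat.epi_iff_surjective _).mpr (pp_surj hR N₀ h₀ 0)

instance cres_projective (n : ℕ) : CategoryTheory.Projective ((cres hR N₀ h₀).X n) :=
  ModuleCat.projective_of_free (Pi.basisFun R (Fin (kk hR N₀ h₀ n)))

/-- The free resolution as a `ProjectiveResolution`. -/
noncomputable def freeRes : CategoryTheory.ProjectiveResolution N₀ where
  complex := cres hR N₀ h₀
  projective := cres_projective hR N₀ h₀
  π := resπ hR N₀ h₀
  quasiIso := ⟨fun n => by
    cases n with
    | zero =>
      rw [ChainComplex.quasiIsoAt₀_iff, ShortComplex.quasiIso_iff_of_zeros']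
      · refine (ShortComplex.exact_and_epi_g_iff_of_iso ?_).2
          ⟨exact0 hR N₀ h₀, p0_epi hR N₀ h₀⟩
        refine ShortComplex.isoMk (Iso.refl _) (Iso.refl _) (Iso.refl _) ?_ ?_
        · dsimp [cres]
          rfl
        · dsimp [resπ]
          simp [ChainComplex.toSingle₀Equiv]
          rfl
      all_goals rfl
    | succ n =>
      rw [quasiIsoAt_iff_exactAt']
      · exact cres_exactAt hR N₀ h₀ n
      · apply ChainComplex.exactAt_succ_single_obj⟩

end FreeResolution

open FreeResolution in
/-- **Theorem.** Let `R` be a coherent commutative ring, `𝔗` a torsion theory, `𝔞` a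
finitely generated ideal of `R` and `M ∈ 𝔗`. Then `Ext^i_R(R/𝔞, M) ∈ 𝔗` for all `i ≥ 0`. -/
theorem ext_mem_of_mem_of_isCoherentRing (hR : IsCoherentRing R)
    (T : Set (ModuleCat.{u} R)) (hT : IsTorsionTheory R T)
    (a : Ideal R) (ha : a.FG) (M : Type u) [AddCommGroup M] [Module R M]
    (hM : ModuleCat.of R M ∈ T) :
    ∀ i : ℕ, ((Ext R (ModuleCat.{u} R) i).obj (Opposite.op (ModuleCat.of R (R ⧸ a)))).obj
      (ModuleCat.of R M) ∈ T := by
  intro i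
  have h₀ : Module.FinitePresentation R (R ⧸ a) := by
    refine Module.finitePresentation_of_surjective a.mkQ (Submodule.mkQ_surjective a) ?_
    rwa [Submodule.ker_mkQ]
  set Z : ModuleCat.{u} R := ModuleCat.of R (R ⧸ a) with hZ
  set P : CategoryTheory.ProjectiveResolution Z := freeRes hR Z h₀ with hP
  set K := P.complex.linearYonedaObj R (ModuleCat.of R M) with hK
  set k : ℕ := kk hR Z h₀ i with hk
  -- the `i`-th term of the Hom-complex is a finite power of `M`
  have e0 : ((Fin k → R) →ₗ[R] M) ≃ₗ[R] (Fin k → M) :=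
    (LinearMap.lsum R (fun _ : Fin k => R) R).symm.trans
      (LinearEquiv.piCongrRight fun _ => LinearMap.ringLmapEquivSelf R R M)
  have eX : K.X i ≅ ModuleCat.of R (Fin k → M) :=
    LinearEquiv.toModuleIso (X₁ := K.X i) (ModuleCat.homLinearEquiv.trans e0)
  have hXi : K.X i ∈ T := hT.mem_of_iso eX.symm (tt_pow_mem hT hM k)
  have hker : ModuleCat.of R (LinearMap.ker (K.sc i).g.hom) ∈ T :=
    hT.submodule_mem hXi (LinearMap.ker (K.sc i).g.hom)
  have hquot := hT.quotient_mem hker (LinearMap.range (K.sc i).moduleCatToCycles)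
  have e1 := P.isoExt (R := R) i (ModuleCat.of R M)
  have e2 := (K.sc i).moduleCatHomologyIso
  exact hT.mem_of_iso (e1 ≪≫ e2).symm hquot
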